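/- Let g : [0,∞) → [0,∞) be non-increasing and F̄_Y integrable on [0,∞). For the single-deployment problem (N_D = 1), the objective h(δ₁) = g(0) ∫₀^{δ₁} F̄_Y(t) dt + g(δ₁) ∫_{δ₁}^∞ F̄_Y(t) dt satisfies: if additionally g is differentiable and convex with g' < 0, F̄_Y > 0, and m_Y is continuous with (g(0) − g(δ))/(−g'(δ)) − m_Y(δ) changing sign from negative to positive exactly once at δ₁*, then δ₁* is the unique minimizer of h on (0,∞). -/

import Mathlib

open MeasureTheory Set

/-- Single-deployment problem (`N_D = 1`): if
`ψ(δ) = (g(0) - g(δ))/(-g'(δ)) - m_Y(δ)` changes sign from negative to positive exactly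
once at `δ₁*`, then `δ₁*` is the unique minimizer of
`h(δ) = g(0)∫₀^δ F̄ + g(δ)∫_δ^∞ F̄` on `(0,∞)`. -/
theorem stmt_19 (g g' F : ℝ → ℝ)
    (hg_anti : AntitoneOn g (Set.Ici 0)) (hg_nonneg : ∀ t, 0 ≤ t → 0 ≤ g t)
    (hg_conv : ConvexOn ℝ (Set.Ici 0) g)
    (hg_deriv : ∀ t, HasDerivAt g (g' t) t) (hg'_neg : ∀ t, 0 ≤ t → g' t < 0)
    (hF_pos : ∀ t, 0 < F t) (hF_cont : Continuous F)
    (hF_int : IntegrableOn F (Set.Ioi 0))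
    (hm_cont : ContinuousOn (fun d => (∫ u in Set.Ioi d, F u) / F d) (Set.Ioi 0))
    (δ₁ : ℝ) (hδ₁ : 0 < δ₁)
    (hneg : ∀ d, 0 < d → d < δ₁ →
      (g 0 - g d) / (-(g' d)) - (∫ u in Set.Ioi d, F u) / F d < 0)
    (hpos : ∀ d, δ₁ < d →
      0 < (g 0 - g d) / (-(g' d)) - (∫ u in Set.Ioi d, F u) / F d) :
    ∀ d, 0 < d → d ≠ δ₁ →
      g 0 * (∫ t in Set.Ioc (0:ℝ) δ₁, F t) + g δ₁ * (∫ t in Set.Ioi δ₁, F t)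
        < g 0 * (∫ t in Set.Ioc (0:ℝ) d, F t) + g d * (∫ t in Set.Ioi d, F t) := by
  set C : ℝ := ∫ u in Set.Ioi (0:ℝ), F u with hC
  set A : ℝ → ℝ := fun d => ∫ t in (0:ℝ)..d, F t with hA
  set H : ℝ → ℝ := fun d => g 0 * A d + g d * (C - A d) with hH
  -- splitting the integral
  have hsplit : ∀ x : ℝ, 0 < x → C - A x = ∫ u in Set.Ioi x, F u := by
    intro x hx
    have hA' : A x = ∫ t in Set.Ioc (0:ℝ) x, F t :=
      intervalIntegral.integral_of_le hx.le
    have hu : Set.Ioc (0:ℝ) x ∪ Set.Ioi x = Set.Ioi (0:ℝ) :=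
      Set.Ioc_union_Ioi_eq_Ioi hx.le
    have hdisj : Disjoint (Set.Ioc (0:ℝ) x) (Set.Ioi x) :=
      Set.Ioc_disjoint_Ioi le_rfl
    have hi1 : IntegrableOn F (Set.Ioc (0:ℝ) x) :=
      hF_int.mono_set (by rw [← hu]; exact Set.subset_union_left)
    have hi2 : IntegrableOn F (Set.Ioi x) :=
      hF_int.mono_set (by rw [← hu]; exact Set.subset_union_right)
    have := MeasureTheory.setIntegral_union hdisj measurableSet_Ioi hi1 hi2
    rw [hu] at this
    rw [hA', hC]; linarith [this]
  -- derivative of A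
  have hA_deriv : ∀ x : ℝ, HasDerivAt A (F x) x := by
    intro x
    exact intervalIntegral.integral_hasDerivAt_right
      (hF_cont.intervalIntegrable 0 x)
      (hF_cont.stronglyMeasurable.stronglyMeasurableAtFilter)
      hF_cont.continuousAt
  -- derivative of H
  have hH_deriv : ∀ x : ℝ,
      HasDerivAt H (F x * (g 0 - g x) + g' x * (C - A x)) x := by
    intro x
    have h1 : HasDerivAt (fun d => g 0 * A d) (g 0 * F x) x :=
      (hA_deriv x).const_mul (g 0)
    have h2 : HasDerivAt (fun d => g d * (C - A d))
        (g' x * (C - A x) + g x * (0 - F x)) x :=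
      (hg_deriv x).mul ((hasDerivAt_const x C).sub (hA_deriv x))
    have := h1.add h2
    exact this.congr_deriv (by ring)
  have hH_cont : Continuous H := by
    have : Differentiable ℝ H := fun x => (hH_deriv x).differentiableAt
    exact this.continuous
  -- deriv H
  have hderiv_eq : ∀ x : ℝ, deriv H x = F x * (g 0 - g x) + g' x * (C - A x) :=
    fun x => (hH_deriv x).deriv
  -- sign rewriting
  have hsign : ∀ x : ℝ, 0 < x →
      deriv H x = (-(g' x)) * F x *
        ((g 0 - g x) / (-(g' x)) - (∫ u in Set.Ioi x, F u) / F x) := by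
    intro x hx
    rw [hderiv_eq, ← hsplit x hx]
    have hg'x : g' x ≠ 0 := (hg'_neg x hx.le).ne
    have hFx : F x ≠ 0 := (hF_pos x).ne'
    have key : -g' x * F x * ((g 0 - g x) / -g' x - (C - A x) / F x)
        = (F x * (g 0 - g x)) * (-g' x * (-g' x)⁻¹) + (g' x * (C - A x)) * (F x * (F x)⁻¹) := by
      ring
    rw [key, mul_inv_cancel₀ (neg_ne_zero.mpr hg'x), mul_inv_cancel₀ hFx]
    ring
  -- strict antitone on Icc 0 δ₁
  have hanti : StrictAntiOn H (Set.Icc 0 δ₁) := by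
    apply strictAntiOn_of_deriv_neg (convex_Icc 0 δ₁) hH_cont.continuousOn
    intro x hx
    rw [interior_Icc] at hx
    rw [hsign x hx.1]
    exact mul_neg_of_pos_of_neg
      (mul_pos (neg_pos.mpr (hg'_neg x hx.1.le)) (hF_pos x))
      (hneg x hx.1 hx.2)
  -- strict monotone on Ici δ₁
  have hmono : StrictMonoOn H (Set.Ici δ₁) := by
    apply strictMonoOn_of_deriv_pos (convex_Ici δ₁) hH_cont.continuousOn
    intro x hx
    rw [interior_Ici] at hx
    rw [hsign x (hδ₁.trans hx)]
    exact mul_pos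
      (mul_pos (neg_pos.mpr (hg'_neg x (hδ₁.trans hx).le)) (hF_pos x))
      (hpos x hx)
  -- H equals the stated objective
  have hHeq : ∀ x : ℝ, 0 < x →
      H x = g 0 * (∫ t in Set.Ioc (0:ℝ) x, F t) + g x * (∫ t in Set.Ioi x, F t) := by
    intro x hx
    have hA' : A x = ∫ t in Set.Ioc (0:ℝ) x, F t :=
      intervalIntegral.integral_of_le hx.le
    show g 0 * A x + g x * (C - A x) = _
    rw [hsplit x hx, hA']
  intro d hd hne
  rw [← hHeq δ₁ hδ₁, ← hHeq d hd]
  rcases lt_or_gt_of_ne hne with h | h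
  · exact hanti (Set.mem_Icc.mpr ⟨hd.le, h.le⟩) (Set.mem_Icc.mpr ⟨hδ₁.le, le_rfl⟩) h
  · exact hmono (Set.mem_Ici.mpr le_rfl) (Set.mem_Ici.mpr h.le) h
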